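/- In the non-zero-sum malware detection game Γ, the three sets of Defender strategies coincide: the set of Defender Nash-equilibrium strategies {ρ : ∃ μ, (ρ,μ) is a mixed Nash equilibrium of Γ}, the set of Defender maximin strategies, and the set of Defender Strong Stackelberg Equilibrium strategies are all equal. -/

import Mathlib

open Finset Set

/-! ### Auxiliary lemmas -/

lemma finUnivNe {M : ℕ} (hM : 0 < M) : (Finset.univ : Finset (Fin M)).Nonempty :=
  ⟨⟨0, hM⟩, Finset.mem_univ _⟩

/-- A weighted average is at most the max. -/
lemma sum_mul_le_sup' {M : ℕ} (hM : 0 < M) (c : Fin M → ℝ) {μ : Fin M → ℝ}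
    (hμ : μ ∈ stdSimplex ℝ (Fin M)) :
    ∑ l, μ l * c l ≤ Finset.univ.sup' (finUnivNe hM) c := by
  set m := Finset.univ.sup' (finUnivNe hM) c with hm
  calc ∑ l, μ l * c l ≤ ∑ l, μ l * m := by
        refine Finset.sum_le_sum fun l _ => ?_
        exact mul_le_mul_of_nonneg_left (Finset.le_sup' c (Finset.mem_univ l)) (hμ.1 l)
    _ = m := by rw [← Finset.sum_mul, hμ.2, one_mul]

/-- The max is attained by some vertex of the simplex. -/
lemma exists_vertex_sum_eq {M : ℕ} (hM : 0 < M) (c : Fin M → ℝ) :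
    ∃ μ ∈ stdSimplex ℝ (Fin M), ∑ l, μ l * c l = Finset.univ.sup' (finUnivNe hM) c := by
  obtain ⟨l₀, -, hl₀⟩ := Finset.exists_mem_eq_sup' (finUnivNe hM) c
  refine ⟨(if l₀ = · then (1:ℝ) else 0), ite_eq_mem_stdSimplex ℝ l₀, ?_⟩
  rw [hl₀]
  simp [Finset.sum_ite_eq, ite_mul]

/-- **Von Neumann-type minimax half**: if `w` is below the column-max for every
mixed row strategy, then some mixed column strategy guarantees at least `w` in
every row.  Proven by a separating-hyperplane argument. -/
lemma minimax {R M : ℕ} (hR : 0 < R) (hM : 0 < M) (B : Fin R → Fin M → ℝ) (w : ℝ)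
    (hw : ∀ ρ ∈ stdSimplex ℝ (Fin R), ∃ l, w ≤ ∑ j, ρ j * B j l) :
    ∃ μ ∈ stdSimplex ℝ (Fin M), ∀ j, w ≤ ∑ l, μ l * B j l := by
  by_contra hcon
  push_neg at hcon
  set φ : (Fin M → ℝ) → (Fin R → ℝ) := fun μ j => ∑ l, μ l * B j l with hφ
  have hlin : IsLinearMap ℝ φ := by
    constructor
    · intro a b; funext j; simp [hφ, add_mul, Finset.sum_add_distrib]
    · intro c a; funext j; simp [hφ, Finset.mul_sum, mul_assoc]
  have hcont : Continuous φ :=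
    continuous_pi fun j => continuous_finset_sum _ fun l _ =>
      (continuous_apply l).mul continuous_const
  set D := φ '' stdSimplex ℝ (Fin M) with hD
  set T : Set (Fin R → ℝ) := Set.univ.pi (fun _ => Ici w) with hT
  have hDconv : Convex ℝ D := (convex_stdSimplex ℝ _).is_linear_image hlin
  have hDcomp : IsCompact D := (isCompact_stdSimplex ℝ (Fin M)).image hcont
  have hTconv : Convex ℝ T := convex_pi fun _ _ => convex_Ici w
  have hTclosed : IsClosed T := isClosed_set_pi fun _ _ => isClosed_Ici
  have hdisj : Disjoint D T := by
    rw [Set.disjoint_left]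
    rintro x ⟨μ, hμ, rfl⟩ hxT
    obtain ⟨j, hj⟩ := hcon μ hμ
    exact absurd (hxT j (Set.mem_univ j)) (not_le.mpr hj)
  obtain ⟨f, u, v, hfu, huv, hvf⟩ :=
    geometric_hahn_banach_compact_closed hDconv hDcomp hTconv hTclosed hdisj
  set g := fun i : Fin R => f (fun j => if i = j then (1:ℝ) else 0) with hg
  have hf : ∀ x : Fin R → ℝ, f x = ∑ i, x i * g i := by
    intro x
    simpa [smul_eq_mul] using LinearMap.pi_apply_eq_sum_univ (f : (Fin R → ℝ) →ₗ[ℝ] ℝ) x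
  set Tot := ∑ i, g i with hTot
  have hone_mem : (fun _ : Fin R => w) ∈ T := by
    intro i _; exact le_refl w
  have hfone : f (fun _ => w) = w * Tot := by
    rw [hf, hTot, Finset.mul_sum]
  have hgpos : ∀ j, 0 ≤ g j := by
    intro j
    by_contra hneg
    push_neg at hneg
    set s := max 0 ((v - w * Tot) / g j) with hs
    have hs0 : 0 ≤ s := le_max_left _ _
    have hpt : (fun i => w + (if j = i then s else 0)) ∈ T := by
      intro i _
      dsimp
      by_cases hji : j = i <;> simp [hji, hs0]
    have hfpt : f (fun i => w + (if j = i then s else 0)) = w * Tot + s * g j := by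
      rw [hf]
      rw [show ∑ i, (w + if j = i then s else 0) * g i
          = ∑ i, (w * g i + (if j = i then s * g i else 0)) from
        Finset.sum_congr rfl fun i _ => by split <;> ring]
      rw [Finset.sum_add_distrib, ← Finset.mul_sum, Finset.sum_ite_eq, if_pos (Finset.mem_univ j)]
    have h1 : (v - w * Tot) / g j ≤ s := le_max_right _ _
    have h2 : s * g j ≤ v - w * Tot := by
      have := mul_le_mul_of_nonpos_right h1 (le_of_lt hneg)
      rwa [div_mul_cancel₀ _ (ne_of_lt hneg)] at this
    have := hvf _ hpt
    rw [hfpt] at this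
    linarith
  have hcol : ∀ l : Fin M, (fun j => B j l) ∈ D := by
    intro l
    refine ⟨(fun l' => if l = l' then (1:ℝ) else 0), ite_eq_mem_stdSimplex ℝ l, ?_⟩
    funext j
    simp [hφ, ite_mul, Finset.sum_ite_eq]
  have hfcol : ∀ l, f (fun j => B j l) = ∑ j, B j l * g j := fun l => hf _
  have hTotnn : 0 ≤ Tot := Finset.sum_nonneg fun i _ => hgpos i
  have hTotpos : 0 < Tot := by
    rcases lt_or_eq_of_le hTotnn with h | h
    · exact h
    · exfalso
      have hz : ∀ i, g i = 0 := by
        intro i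
        have := (Finset.sum_eq_zero_iff_of_nonneg (fun i _ => hgpos i)).mp h.symm
        exact this i (Finset.mem_univ i)
      have h1 := hfu _ (hcol ⟨0, hM⟩)
      have h2 := hvf _ hone_mem
      rw [hfcol] at h1
      rw [hfone] at h2
      simp [hz, hTot] at h1 h2
      linarith
  set ρ := fun j => g j / Tot with hρ
  have hρΔ : ρ ∈ stdSimplex ℝ (Fin R) := by
    constructor
    · intro j; exact div_nonneg (hgpos j) hTotnn
    · rw [hρ, ← Finset.sum_div, div_self (ne_of_gt hTotpos)]
  obtain ⟨l, hl⟩ := hw ρ hρΔ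
  have h1 := hfu _ (hcol l)
  have h2 := hvf _ hone_mem
  rw [hfcol] at h1
  rw [hfone] at h2
  have h3 : ∑ j, ρ j * B j l = (∑ j, B j l * g j) / Tot := by
    rw [Finset.sum_div]
    exact Finset.sum_congr rfl fun j _ => by rw [hρ]; ring
  have h4 : (∑ j, B j l * g j) / Tot < w := by
    rw [div_lt_iff₀ hTotpos]
    linarith
  rw [h3] at hl
  linarith

/-! ### Game definitions -/

/-- Expected security damage bilinear form `S(ρ,μ) = Σ_{j,l} ρ j · μ l · S j l`. -/
def Sbil {R M : ℕ} (S : Fin R → Fin M → ℝ) (ρ : Fin R → ℝ) (μ : Fin M → ℝ) : ℝ :=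
  ∑ j, ∑ l, ρ j * μ l * S j l

/-- Expected inspection cost `k(ρ) = Σ_j ρ j · C j`. -/
def kcost {R : ℕ} (C : Fin R → ℝ) (ρ : Fin R → ℝ) : ℝ :=
  ∑ j, ρ j * C j

/-- Defender expected utility `U_d(ρ,μ) = -S(ρ,μ) - k(ρ)` (same in `Γ₀` and `Γ`). -/
def Ud {R M : ℕ} (S : Fin R → Fin M → ℝ) (C : Fin R → ℝ) (ρ : Fin R → ℝ)
    (μ : Fin M → ℝ) : ℝ :=
  -Sbil S ρ μ - kcost C ρ

/-- Mixed Nash equilibrium of the zero-sum game `Γ₀`, where the Attacker's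
utility is `U_a^{Γ₀}(ρ,μ) = -U_d(ρ,μ)`. -/
def NEzero {R M : ℕ} (S : Fin R → Fin M → ℝ) (C : Fin R → ℝ) (ρs : Fin R → ℝ)
    (μs : Fin M → ℝ) : Prop :=
  ρs ∈ stdSimplex ℝ (Fin R) ∧ μs ∈ stdSimplex ℝ (Fin M) ∧
  (∀ ρ ∈ stdSimplex ℝ (Fin R), Ud S C ρs μs ≥ Ud S C ρ μs) ∧
  (∀ μ ∈ stdSimplex ℝ (Fin M), -Ud S C ρs μs ≥ -Ud S C ρs μ)

/-- Mixed Nash equilibrium of the non-zero-sum game `Γ`, where the Attacker's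
utility is `U_a^{Γ}(ρ,μ) = Ξ·S(ρ,μ)`. -/
def NEgame {R M : ℕ} (S : Fin R → Fin M → ℝ) (C : Fin R → ℝ) (Ξ : ℝ)
    (ρs : Fin R → ℝ) (μs : Fin M → ℝ) : Prop :=
  ρs ∈ stdSimplex ℝ (Fin R) ∧ μs ∈ stdSimplex ℝ (Fin M) ∧
  (∀ ρ ∈ stdSimplex ℝ (Fin R), Ud S C ρs μs ≥ Ud S C ρ μs) ∧
  (∀ μ ∈ stdSimplex ℝ (Fin M), Ξ * Sbil S ρs μs ≥ Ξ * Sbil S ρs μ)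

/-- Maximin strategy of the Defender. -/
def Maximin {R M : ℕ} (S : Fin R → Fin M → ℝ) (C : Fin R → ℝ)
    (ρd : Fin R → ℝ) : Prop :=
  ρd ∈ stdSimplex ℝ (Fin R) ∧
  ∀ ρ ∈ stdSimplex ℝ (Fin R),
    sInf ((Ud S C ρd) '' stdSimplex ℝ (Fin M)) ≥
      sInf ((Ud S C ρ) '' stdSimplex ℝ (Fin M))

/-- The Attacker's best-response set to `ρ` in the non-zero-sum game `Γ`. -/
def BRset {R M : ℕ} (S : Fin R → Fin M → ℝ) (Ξ : ℝ) (ρ : Fin R → ℝ) :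
    Set (Fin M → ℝ) :=
  {μ | μ ∈ stdSimplex ℝ (Fin M) ∧
    ∀ μ' ∈ stdSimplex ℝ (Fin M), Ξ * Sbil S ρ μ ≥ Ξ * Sbil S ρ μ'}

/-- Strong Stackelberg Equilibrium strategy of the Defender in `Γ`. -/
def SSEstrat {R M : ℕ} (S : Fin R → Fin M → ℝ) (C : Fin R → ℝ) (Ξ : ℝ)
    (ρs : Fin R → ℝ) : Prop :=
  ρs ∈ stdSimplex ℝ (Fin R) ∧
  ∀ ρ ∈ stdSimplex ℝ (Fin R),
    sSup ((Ud S C ρs) '' BRset S Ξ ρs) ≥ sSup ((Ud S C ρ) '' BRset S Ξ ρ)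

/-! ### More auxiliary lemmas about `Ud`, `Sbil`, and `BRset` -/

/-- The worst-case payoff column value. -/
noncomputable def wval {R M : ℕ} (hM : 0 < M) (S : Fin R → Fin M → ℝ) (C : Fin R → ℝ)
    (ρ : Fin R → ℝ) : ℝ :=
  Finset.univ.sup' (finUnivNe hM) (fun l => ∑ j, ρ j * (S j l + C j))

lemma Sbil_eq {R M : ℕ} (S : Fin R → Fin M → ℝ) (ρ : Fin R → ℝ) (μ : Fin M → ℝ) :
    Sbil S ρ μ = ∑ l, μ l * (∑ j, ρ j * S j l) := by
  rw [Sbil, Finset.sum_comm]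
  exact Finset.sum_congr rfl fun l _ => by
    rw [Finset.mul_sum]; exact Finset.sum_congr rfl fun j _ => by ring

lemma wval_eq {R M : ℕ} (hM : 0 < M) (S : Fin R → Fin M → ℝ) (C : Fin R → ℝ)
    (ρ : Fin R → ℝ) :
    wval hM S C ρ = Finset.univ.sup' (finUnivNe hM) (fun l => ∑ j, ρ j * S j l)
      + kcost C ρ := by
  have hpt : ∀ l : Fin M, ∑ j, ρ j * (S j l + C j) = (∑ j, ρ j * S j l) + kcost C ρ := by
    intro l
    rw [kcost, ← Finset.sum_add_distrib]
    exact Finset.sum_congr rfl fun j _ => by ring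
  set mS := Finset.univ.sup' (finUnivNe hM) (fun l => ∑ j, ρ j * S j l) with hmS
  refine le_antisymm (Finset.sup'_le _ _ fun l _ => ?_) ?_
  · rw [hpt l]
    exact add_le_add_left (Finset.le_sup' (fun l => ∑ j, ρ j * S j l) (Finset.mem_univ l)) _
  · obtain ⟨l₀, -, hl₀⟩ := Finset.exists_mem_eq_sup' (finUnivNe hM) (fun l => ∑ j, ρ j * S j l)
    calc mS + kcost C ρ = ∑ j, ρ j * (S j l₀ + C j) := by rw [hpt l₀, hmS, hl₀]
      _ ≤ wval hM S C ρ := Finset.le_sup' (fun l => ∑ j, ρ j * (S j l + C j)) (Finset.mem_univ l₀)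

lemma Ud_eq {R M : ℕ} (S : Fin R → Fin M → ℝ) (C : Fin R → ℝ) (ρ : Fin R → ℝ)
    {μ : Fin M → ℝ} (hμ : μ ∈ stdSimplex ℝ (Fin M)) :
    Ud S C ρ μ = -∑ l, μ l * (∑ j, ρ j * (S j l + C j)) := by
  have h1 : ∑ l, μ l * (∑ j, ρ j * (S j l + C j))
      = Sbil S ρ μ + kcost C ρ := by
    have : ∑ l, μ l * (∑ j, ρ j * (S j l + C j))
        = ∑ l, ((∑ j, ρ j * μ l * S j l) + μ l * kcost C ρ) := by
      refine Finset.sum_congr rfl fun l _ => ?_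
      rw [Finset.mul_sum, kcost, Finset.mul_sum, ← Finset.sum_add_distrib]
      exact Finset.sum_congr rfl fun j _ => by ring
    rw [this, Finset.sum_add_distrib, ← Finset.sum_mul, hμ.2, one_mul, Sbil,
      Finset.sum_comm]
  rw [h1, Ud]; ring

lemma Ud_ge {R M : ℕ} (hM : 0 < M) (S : Fin R → Fin M → ℝ) (C : Fin R → ℝ) (ρ : Fin R → ℝ)
    {μ : Fin M → ℝ} (hμ : μ ∈ stdSimplex ℝ (Fin M)) :
    -wval hM S C ρ ≤ Ud S C ρ μ := by
  rw [Ud_eq S C ρ hμ, neg_le_neg_iff]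
  exact sum_mul_le_sup' hM _ hμ

lemma Ud_exists_eq {R M : ℕ} (hM : 0 < M) (S : Fin R → Fin M → ℝ) (C : Fin R → ℝ)
    (ρ : Fin R → ℝ) :
    ∃ μ ∈ stdSimplex ℝ (Fin M), Ud S C ρ μ = -wval hM S C ρ := by
  obtain ⟨μ, hμ, hev⟩ := exists_vertex_sum_eq hM (fun l => ∑ j, ρ j * (S j l + C j))
  exact ⟨μ, hμ, by rw [Ud_eq S C ρ hμ, hev]; rfl⟩

lemma sInf_Ud {R M : ℕ} (hM : 0 < M) (S : Fin R → Fin M → ℝ) (C : Fin R → ℝ)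
    (ρ : Fin R → ℝ) :
    sInf (Ud S C ρ '' stdSimplex ℝ (Fin M)) = -wval hM S C ρ := by
  obtain ⟨μ₀, hμ₀, he⟩ := Ud_exists_eq hM S C ρ
  have hlb : ∀ y ∈ Ud S C ρ '' stdSimplex ℝ (Fin M), -wval hM S C ρ ≤ y := by
    rintro y ⟨μ, hμ, rfl⟩; exact Ud_ge hM S C ρ hμ
  refine le_antisymm ?_ (le_csInf ⟨_, ⟨μ₀, hμ₀, rfl⟩⟩ hlb)
  exact he ▸ csInf_le ⟨_, hlb⟩ ⟨μ₀, hμ₀, rfl⟩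

lemma sSup_BR {R M : ℕ} (hM : 0 < M) (S : Fin R → Fin M → ℝ) (C : Fin R → ℝ)
    {Ξ : ℝ} (hΞ : 0 < Ξ) (ρ : Fin R → ℝ) :
    sSup (Ud S C ρ '' BRset S Ξ ρ) = -wval hM S C ρ := by
  set mS := Finset.univ.sup' (finUnivNe hM) (fun l => ∑ j, ρ j * S j l) with hmS
  obtain ⟨μ₀, hμ₀, he₀⟩ := exists_vertex_sum_eq hM (fun l => ∑ j, ρ j * S j l)
  have hSb₀ : Sbil S ρ μ₀ = mS := by rw [Sbil_eq, he₀]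
  have hμ₀BR : μ₀ ∈ BRset S Ξ ρ := by
    refine ⟨hμ₀, fun μ' hμ' => ?_⟩
    have h1 : Sbil S ρ μ' ≤ mS := by
      rw [Sbil_eq]; exact sum_mul_le_sup' hM _ hμ'
    have h2 : Sbil S ρ μ' ≤ Sbil S ρ μ₀ := by rw [hSb₀]; exact h1
    exact mul_le_mul_of_nonneg_left h2 (le_of_lt hΞ)
  have hchar : ∀ μ ∈ BRset S Ξ ρ, Ud S C ρ μ = -wval hM S C ρ := by
    rintro μ ⟨hμΔ, hbr⟩
    have h1 : Sbil S ρ μ ≤ mS := by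
      rw [Sbil_eq]; exact sum_mul_le_sup' hM _ hμΔ
    have h2 : Sbil S ρ μ₀ ≤ Sbil S ρ μ := le_of_mul_le_mul_left (hbr μ₀ hμ₀) hΞ
    have h3 : Sbil S ρ μ = mS := le_antisymm h1 (hSb₀ ▸ h2)
    rw [Ud, h3, wval_eq hM, ← hmS]
    ring
  have himg : Ud S C ρ '' BRset S Ξ ρ = {-wval hM S C ρ} := by
    refine Set.eq_singleton_iff_nonempty_unique_mem.mpr ⟨⟨_, ⟨μ₀, hμ₀BR, rfl⟩⟩, ?_⟩
    rintro y ⟨μ, hμ, rfl⟩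
    exact hchar μ hμ
  rw [himg, csSup_singleton]

/-! ### Main theorem -/

/-- in `Γ`, the set of Defender Nash-equilibrium strategies, the
set of Defender maximin strategies and the set of Defender Strong Stackelberg
Equilibrium strategies all coincide. -/
theorem stmt4 {R M : ℕ} (hR : 0 < R) (hM : 0 < M)
    (S : Fin R → Fin M → ℝ) (hS : ∀ j l, 0 ≤ S j l)
    (C : Fin R → ℝ) (hC : ∀ j, 0 ≤ C j)
    (Ξ : ℝ) (hΞ : 0 < Ξ) :
    {ρ : Fin R → ℝ | ∃ μ, NEgame S C Ξ ρ μ} = {ρ | Maximin S C ρ} ∧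
    {ρ : Fin R → ℝ | Maximin S C ρ} = {ρ | SSEstrat S C Ξ ρ} := by
  constructor
  · -- Nash = Maximin
    ext ρ
    simp only [Set.mem_setOf_eq]
    constructor
    · rintro ⟨μs, hρΔ, hμΔ, hd, ha⟩
      refine ⟨hρΔ, fun ρ' hρ' => ?_⟩
      rw [sInf_Ud hM S C, sInf_Ud hM S C]
      obtain ⟨μ₀, hμ₀, he₀⟩ := Ud_exists_eq hM S C ρ
      have h1 : Ud S C ρ μs ≤ -wval hM S C ρ := by
        rw [← he₀]
        have h2 : Sbil S ρ μ₀ ≤ Sbil S ρ μs := le_of_mul_le_mul_left (ha μ₀ hμ₀) hΞ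
        simp only [Ud]; linarith
      have h2 : -wval hM S C ρ' ≤ Ud S C ρ' μs := Ud_ge hM S C ρ' hμΔ
      have h3 : Ud S C ρ' μs ≤ Ud S C ρ μs := hd ρ' hρ'
      exact le_trans h2 (le_trans h3 h1)
    · rintro ⟨hρΔ, hmax⟩
      set w := wval hM S C ρ with hwdef
      have hw : ∀ ρ' ∈ stdSimplex ℝ (Fin R), ∃ l, w ≤ ∑ j, ρ' j * (S j l + C j) := by
        intro ρ' hρ'
        have h := hmax ρ' hρ'
        rw [sInf_Ud hM S C, sInf_Ud hM S C] at h
        have hww : w ≤ wval hM S C ρ' := by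
          rw [hwdef]; linarith [neg_le_neg_iff.mp h]
        obtain ⟨l₀, -, hl₀⟩ :=
          Finset.exists_mem_eq_sup' (finUnivNe hM) (fun l => ∑ j, ρ' j * (S j l + C j))
        refine ⟨l₀, ?_⟩
        rw [← hl₀]
        exact hww
      obtain ⟨μb, hμbΔ, hμb⟩ := minimax hR hM (fun j l => S j l + C j) w hw
      have hrowsum : ∀ ρ' : Fin R → ℝ,
          Sbil S ρ' μb + kcost C ρ' = ∑ j, ρ' j * (∑ l, μb l * (S j l + C j)) := by
        intro ρ'
        rw [Sbil, kcost, ← Finset.sum_add_distrib]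
        refine Finset.sum_congr rfl fun j _ => ?_
        rw [Finset.mul_sum]
        have : ∑ l, ρ' j * (μb l * (S j l + C j))
            = ∑ l, (ρ' j * μb l * S j l + ρ' j * C j * μb l) :=
          Finset.sum_congr rfl fun l _ => by ring
        rw [this, Finset.sum_add_distrib, ← Finset.mul_sum, hμbΔ.2, mul_one]
      have hUb : ∀ ρ' ∈ stdSimplex ℝ (Fin R), Ud S C ρ' μb ≤ -w := by
        intro ρ' hρ'
        have h1 : w ≤ ∑ j, ρ' j * (∑ l, μb l * (S j l + C j)) := by
          calc w = ∑ j, ρ' j * w := by rw [← Finset.sum_mul, hρ'.2, one_mul]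
            _ ≤ _ := Finset.sum_le_sum fun j _ =>
                mul_le_mul_of_nonneg_left (hμb j) (hρ'.1 j)
        have h2 := hrowsum ρ'
        rw [Ud]; linarith
      refine ⟨μb, hρΔ, hμbΔ, fun ρ' hρ' => ?_, fun μ hμ => ?_⟩
      · exact le_trans (hUb ρ' hρ') (Ud_ge hM S C ρ hμbΔ)
      · have h1 : Ud S C ρ μb ≤ -w := hUb ρ hρΔ
        have h2 : -w ≤ Ud S C ρ μ := Ud_ge hM S C ρ hμ
        have h3 : Sbil S ρ μ ≤ Sbil S ρ μb := by
          simp only [Ud] at h1 h2; linarith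
        exact mul_le_mul_of_nonneg_left h3 (le_of_lt hΞ)
  · -- Maximin = SSE
    ext ρ
    simp only [Set.mem_setOf_eq, Maximin, SSEstrat]
    constructor
    · rintro ⟨hρΔ, h⟩
      refine ⟨hρΔ, fun ρ' hρ' => ?_⟩
      rw [sSup_BR hM S C hΞ, sSup_BR hM S C hΞ]
      have := h ρ' hρ'
      rwa [sInf_Ud hM S C, sInf_Ud hM S C] at this
    · rintro ⟨hρΔ, h⟩
      refine ⟨hρΔ, fun ρ' hρ' => ?_⟩
      rw [sInf_Ud hM S C, sInf_Ud hM S C]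
      have := h ρ' hρ'
      rwa [sSup_BR hM S C hΞ, sSup_BR hM S C hΞ] at this
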